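/- Let L be a dually ms Stone semi-Heyting algebra. Then for all x in L, x*″ = x*. -/
import Mathlib


class SemiHeyting (α : Type*) extends Lattice α, BoundedOrder α where
  himp : α → α → α
  sh1 : ∀ x y : α, x ⊓ himp x y = x ⊓ y
  sh2 : ∀ x y z : α, x ⊓ himp y z = x ⊓ himp (x ⊓ y) (x ⊓ z)
  sh3 : ∀ x : α, himp x x = ⊤

namespace SemiHeyting

variable {α : Type*} [SemiHeyting α]

def star (x : α) : α := himp x ⊥

end SemiHeyting

class DQD (α : Type*) extends SemiHeyting α where
  prime : α → α
  prime_bot : prime ⊥ = ⊤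
  prime_top : prime ⊤ = ⊥
  prime_inf : ∀ x y : α, prime (x ⊓ y) = prime x ⊔ prime y
  prime_prime_sup : ∀ x y : α, prime (prime (x ⊔ y)) = prime (prime x) ⊔ prime (prime y)
  prime_prime_le : ∀ x : α, prime (prime x) ≤ x

class DmsSt (α : Type*) extends DQD α where
  stone : ∀ x : α, SemiHeyting.star x ⊔ SemiHeyting.star (SemiHeyting.star x) = ⊤
  jdm : ∀ x y : α, prime (x ⊔ y) = prime x ⊓ prime y

open SemiHeyting DQD

section aux

variable {α : Type*} [SemiHeyting α]

/-- `x → (x ⊓ y)` is a Heyting implication: if `x ⊓ z ≤ y` then `z ≤ x → (x ⊓ y)`. -/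
lemma le_himp_of_inf_le {x y z : α} (h : x ⊓ z ≤ y) :
    z ≤ SemiHeyting.himp x (x ⊓ y) := by
  have h1 : z ⊓ SemiHeyting.himp x (x ⊓ y)
      = z ⊓ SemiHeyting.himp (z ⊓ x) (z ⊓ (x ⊓ y)) := SemiHeyting.sh2 z x (x ⊓ y)
  have h2 : z ⊓ (x ⊓ y) = z ⊓ x := by
    have : z ⊓ x ≤ y := by rwa [inf_comm] at h
    rw [← inf_assoc]
    exact inf_eq_left.mpr this
  rw [h2, SemiHeyting.sh3] at h1
  simp only [inf_top_eq] at h1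
  calc z = z ⊓ SemiHeyting.himp x (x ⊓ y) := h1.symm
    _ ≤ SemiHeyting.himp x (x ⊓ y) := inf_le_right

/-- Semi-Heyting algebras are distributive. -/
lemma inf_sup_le' (a b c : α) : a ⊓ (b ⊔ c) ≤ (a ⊓ b) ⊔ (a ⊓ c) := by
  set d : α := (a ⊓ b) ⊔ (a ⊓ c) with hd
  have hb : b ≤ SemiHeyting.himp a (a ⊓ d) := le_himp_of_inf_le (le_sup_left)
  have hc : c ≤ SemiHeyting.himp a (a ⊓ d) := le_himp_of_inf_le (le_sup_right)
  have : a ⊓ (b ⊔ c) ≤ a ⊓ SemiHeyting.himp a (a ⊓ d) :=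
    inf_le_inf_left a (sup_le hb hc)
  rw [SemiHeyting.sh1] at this
  exact this.trans (by simp)

lemma inf_star (x : α) : x ⊓ SemiHeyting.star x = ⊥ := by
  rw [SemiHeyting.star, SemiHeyting.sh1, inf_bot_eq]

end aux

theorem stmt14 {α : Type*} [DmsSt α] (x : α) :
    DQD.prime (DQD.prime (SemiHeyting.star x)) = SemiHeyting.star x := by
  set s : α := SemiHeyting.star x with hs
  refine le_antisymm (DQD.prime_prime_le s) ?_
  have htop : DQD.prime (DQD.prime (s ⊔ SemiHeyting.star s)) = (⊤ : α) := by
    rw [DmsSt.stone x, DQD.prime_top, DQD.prime_bot]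
  rw [DQD.prime_prime_sup] at htop
  have h1 : s = s ⊓ (DQD.prime (DQD.prime s) ⊔ DQD.prime (DQD.prime (SemiHeyting.star s))) := by
    rw [htop, inf_top_eq]
  have h2 : s ⊓ DQD.prime (DQD.prime (SemiHeyting.star s)) ≤ ⊥ := by
    calc s ⊓ DQD.prime (DQD.prime (SemiHeyting.star s))
        ≤ s ⊓ SemiHeyting.star s :=
          inf_le_inf_left s (DQD.prime_prime_le _)
      _ = ⊥ := inf_star s
  calc s = s ⊓ (DQD.prime (DQD.prime s) ⊔ DQD.prime (DQD.prime (SemiHeyting.star s))) := h1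
    _ ≤ (s ⊓ DQD.prime (DQD.prime s)) ⊔ (s ⊓ DQD.prime (DQD.prime (SemiHeyting.star s))) :=
        inf_sup_le' _ _ _
    _ ≤ DQD.prime (DQD.prime s) ⊔ ⊥ := sup_le_sup inf_le_right h2
    _ = DQD.prime (DQD.prime s) := by simp
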